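/- arXiv:1612.01554 — 4 statements merged into one kernel-verified Lean document; each statement's English description precedes it below -/
import Mathlib

section
/- Let h : ℝⁿ → ℝ be continuously differentiable, C = {x : h(x) ≥ 0}, and f : ℝⁿ → ℝⁿ locally Lipschitz. If there exists a locally Lipschitz, strictly increasing continuous function α : ℝ → ℝ with α(0) = 0 such that ⟨∇h(x), f(x)⟩ ≥ -α(h(x)) for all x in an open set D containing C, then every solution x(t) of ẋ = f(x) with x(0) ∈ C satisfies x(t) ∈ C for all t ≥ 0 in its maximal interval of existence. -/
open Set Filter Topology RealInnerProductSpace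

theorem zbf_forward_invariance (n : ℕ)
    (h : EuclideanSpace ℝ (Fin n) → ℝ) (hh : ContDiff ℝ 1 h)
    (f : EuclideanSpace ℝ (Fin n) → EuclideanSpace ℝ (Fin n))
    (hf : LocallyLipschitz f)
    (C : Set (EuclideanSpace ℝ (Fin n))) (hC : C = {x | h x ≥ 0})
    (D : Set (EuclideanSpace ℝ (Fin n))) (hD : IsOpen D) (hCD : C ⊆ D)
    (α : ℝ → ℝ) (hα : LocallyLipschitz α) (hmono : StrictMono α)
    (hcont : Continuous α) (hα0 : α 0 = 0)
    (hzbf : ∀ x ∈ D, ⟪gradient h x, f x⟫ ≥ -α (h x))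
    (T : ℝ) (hT : 0 ≤ T) (x : ℝ → EuclideanSpace ℝ (Fin n))
    (hsol : ∀ t ∈ Icc (0 : ℝ) T, HasDerivAt x (f (x t)) t)
    (hx0 : x 0 ∈ C) :
    ∀ t ∈ Icc (0 : ℝ) T, x t ∈ C := by
  subst hC
  set y : ℝ → ℝ := fun t => h (x t) with hy
  have hdiff : Differentiable ℝ h := hh.differentiable one_ne_zero
  have hy0 : 0 ≤ y 0 := hx0
  have hy' : ∀ t ∈ Icc (0:ℝ) T, HasDerivAt y (⟪gradient h (x t), f (x t)⟫) t := by
    intro t ht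
    have h1 : HasFDerivAt h (fderiv ℝ h (x t)) (x t) := (hdiff (x t)).hasFDerivAt
    have h2 := h1.comp_hasDerivAt t (hsol t ht)
    refine h2.congr_deriv ?_
    simp [gradient, InnerProductSpace.toDual_symm_apply]
  have hyc : ContinuousOn y (Icc 0 T) :=
    hh.continuous.comp_continuousOn
      (fun t ht => (hsol t ht).continuousAt.continuousWithinAt)
  -- key local lemma
  have key : ∀ a b : ℝ, 0 ≤ a → b ≤ T → 0 ≤ y a →
      (∀ t ∈ Icc a b, x t ∈ D) → ∀ t ∈ Icc a b, 0 ≤ y t := by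
    intro a b ha0 hbT hya hxD t ht
    have hab : a ≤ b := le_trans ht.1 ht.2
    have hba : Icc a b ⊆ Icc 0 T := Icc_subset_Icc ha0 hbT
    have hneg : ∀ ε > (0:ℝ), -y t ≤ 0 + ε := by
      intro ε hε
      have main := image_le_of_deriv_right_lt_deriv_boundary
        (f := fun s => -y s) (f' := fun s => -⟪gradient h (x s), f (x s)⟫)
        (a := a) (b := b) (B := fun _ => ε) (B' := fun _ => 0)
        ((hyc.mono hba).neg)
        (fun s hs => ((hy' s (hba (Ico_subset_Icc_self hs))).neg).hasDerivWithinAt)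
        (by linarith)
        (fun s => hasDerivAt_const s ε)
        ?_ ht
      · simpa using main
      · intro s hs heq
        have hxD' := hxD s (Ico_subset_Icc_self hs)
        have h1 := hzbf (x s) hxD'
        have h2 : -⟪gradient h (x s), f (x s)⟫ ≤ α (y s) := by
          simp only [ge_iff_le, neg_le] at h1 ⊢
          linarith
        have h3 : y s = -ε := by
          have : -y s = ε := heq
          linarith
        rw [h3] at h2
        have h4 : α (-ε) < α 0 := hmono (by linarith)
        rw [hα0] at h4
        calc -⟪gradient h (x s), f (x s)⟫ ≤ α (-ε) := h2
          _ < 0 := h4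
    have : -y t ≤ 0 := le_of_forall_pos_le_add hneg
    linarith
  -- sup argument
  set A := {t ∈ Icc (0:ℝ) T | ∀ s ∈ Icc 0 t, 0 ≤ y s} with hA
  have h0A : (0:ℝ) ∈ A := by
    refine ⟨⟨le_rfl, hT⟩, fun s hs => ?_⟩
    have : s = 0 := le_antisymm hs.2 hs.1
    rw [this]; exact hy0
  have hAne : A.Nonempty := ⟨0, h0A⟩
  have hbdd : BddAbove A := ⟨T, fun t ht => ht.1.2⟩
  set τ := sSup A with hτ
  have hτ0 : 0 ≤ τ := le_csSup hbdd h0A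
  have hτT : τ ≤ T := csSup_le hAne (fun t ht => ht.1.2)
  have hlt' : ∀ s, 0 ≤ s → s < τ → 0 ≤ y s := by
    intro s hs0 hsτ
    obtain ⟨t, htA, hst⟩ := exists_lt_of_lt_csSup hAne hsτ
    exact htA.2 s ⟨hs0, hst.le⟩
  have hyτ : ∀ s ∈ Icc 0 τ, 0 ≤ y s := by
    intro s hs
    rcases lt_or_eq_of_le hs.2 with hlt | heq
    · exact hlt' s hs.1 hlt
    · subst heq
      rcases eq_or_lt_of_le hs.1 with h0 | h0
    -- s = τ; if τ = 0, done; else continuity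
      · rw [← h0]; exact hy0
      · have hcw : ContinuousWithinAt y (Ico 0 τ) τ :=
          ((hyc.mono (Icc_subset_Icc le_rfl hτT)) τ ⟨hτ0, le_rfl⟩).mono Ico_subset_Icc_self
        have hK : 𝓝[Ico 0 τ] τ = 𝓝[<] τ := nhdsWithin_Ico_eq_nhdsLT h0
        haveI : (𝓝[Ico 0 τ] τ).NeBot := by
          rw [hK]; infer_instance
        refine ge_of_tendsto hcw ?_
        exact eventually_nhdsWithin_of_forall fun r hr => hlt' r hr.1 hr.2
  have hτeq : τ = T := by
    by_contra hne
    have hτlt : τ < T := lt_of_le_of_ne hτT hne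
    have hxτD : x τ ∈ D := hCD (hyτ τ ⟨hτ0, le_rfl⟩)
    have hcx : ContinuousAt x τ := (hsol τ ⟨hτ0, hτT⟩).continuousAt
    have hpre : x ⁻¹' D ∈ nhds τ := hcx.preimage_mem_nhds (hD.mem_nhds hxτD)
    obtain ⟨ε, hε, hball⟩ := Metric.mem_nhds_iff.1 hpre
    set b := min (τ + ε/2) T with hb
    have hτb : τ < b := lt_min (by linarith) hτlt
    have hbT : b ≤ T := min_le_right _ _
    have hsub : Icc τ b ⊆ x ⁻¹' D := by
      intro t ht
      apply hball
      rw [Metric.mem_ball, Real.dist_eq, abs_lt]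
      constructor
      · linarith [ht.1]
      · have : t ≤ τ + ε/2 := le_trans ht.2 (min_le_left _ _)
        linarith
    have hkey := key τ b hτ0 hbT (hyτ τ ⟨hτ0, le_rfl⟩) (fun t ht => hsub ht)
    have hbA : b ∈ A := by
      refine ⟨⟨le_trans hτ0 hτb.le, hbT⟩, fun s hs => ?_⟩
      rcases le_or_gt s τ with hsτ | hsτ
      · exact hyτ s ⟨hs.1, hsτ⟩
      · exact hkey s ⟨hsτ.le, hs.2⟩
    have : b ≤ τ := le_csSup hbdd hbA
    linarith
  intro t ht
  exact hyτ t ⟨ht.1, by rw [hτeq]; exact ht.2⟩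
end

section
/- Let h : ℝ → ℝ be continuously differentiable and suppose h'(x)·f(x) ≥ -α(h(x)) for all x, where α is locally Lipschitz, strictly increasing, and α(0) = 0, and f is locally Lipschitz. If x : [0,T] → ℝ solves ẋ = f(x) with h(x(0)) ≥ 0, then h(x(t)) ≥ 0 for all t ∈ [0,T]. -/
open Set

theorem zbf_forward_invariance_scalar
    (h : ℝ → ℝ) (hh : ContDiff ℝ 1 h)
    (f : ℝ → ℝ) (hf : LocallyLipschitz f)
    (α : ℝ → ℝ) (hα : LocallyLipschitz α) (hmono : StrictMono α) (hα0 : α 0 = 0)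
    (hzbf : ∀ x : ℝ, deriv h x * f x ≥ -α (h x))
    (T : ℝ) (x : ℝ → ℝ)
    (hsol : ∀ t ∈ Icc (0 : ℝ) T, HasDerivAt x (f (x t)) t)
    (hx0 : h (x 0) ≥ 0) :
    ∀ t ∈ Icc (0 : ℝ) T, h (x t) ≥ 0 := by
  set g : ℝ → ℝ := fun t => h (x t) with hg
  have hgderiv : ∀ t ∈ Icc (0 : ℝ) T,
      HasDerivAt g (deriv h (x t) * f (x t)) t := by
    intro t ht
    have hd : HasDerivAt h (deriv h (x t)) (x t) :=
      ((hh.differentiable one_ne_zero) (x t)).hasDerivAt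
    exact hd.comp t (hsol t ht)
  have hgcont : ContinuousOn g (Icc 0 T) := fun t ht =>
    (hgderiv t ht).continuousAt.continuousWithinAt
  intro t1 ht1
  by_contra hneg
  push_neg at hneg
  set S : Set ℝ := Icc 0 t1 ∩ g ⁻¹' Ici 0 with hS
  have hsub : Icc 0 t1 ⊆ Icc 0 T := Icc_subset_Icc le_rfl ht1.2
  have hSclosed : IsClosed S :=
    (hgcont.mono hsub).preimage_isClosed_of_isClosed isClosed_Icc isClosed_Ici
  have hSne : S.Nonempty := ⟨0, ⟨le_rfl, ht1.1⟩, hx0⟩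
  have hSbdd : BddAbove S := ⟨t1, fun s hs => hs.1.2⟩
  set t0 := sSup S with ht0
  have ht0S : t0 ∈ S := hSclosed.csSup_mem hSne hSbdd
  have ht0le : t0 ≤ t1 := ht0S.1.2
  have hgt0 : 0 ≤ g t0 := ht0S.2
  have ht0lt : t0 < t1 := by
    rcases lt_or_eq_of_le ht0le with h' | h'
    · exact h'
    · exact absurd (h' ▸ hgt0) (not_le.mpr hneg)
  have hneg' : ∀ t ∈ Ioc t0 t1, g t < 0 := by
    intro t ht
    by_contra hc
    push_neg at hc
    have : t ∈ S := ⟨⟨le_trans ht0S.1.1 ht.1.le, ht.2⟩, hc⟩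
    exact absurd (le_csSup hSbdd this) (not_le.mpr ht.1)
  have hmem : Icc t0 t1 ⊆ Icc 0 T :=
    Icc_subset_Icc ht0S.1.1 ht1.2
  have hmono' : MonotoneOn g (Icc t0 t1) := by
    have hder : ∀ t ∈ interior (Icc t0 t1), 0 ≤ deriv g t := by
      intro t ht
      rw [interior_Icc] at ht
      have htT : t ∈ Icc 0 T := hmem ⟨ht.1.le, ht.2.le⟩
      have hgd := hgderiv t htT
      rw [hgd.deriv]
      have hgneg : g t ≤ 0 := (hneg' t ⟨ht.1, ht.2.le⟩).le
      have : α (g t) ≤ 0 := hα0 ▸ hmono.monotone hgneg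
      have := hzbf (x t)
      linarith
    exact monotoneOn_of_deriv_nonneg (convex_Icc t0 t1)
      (hgcont.mono hmem)
      (fun t ht => by
        rw [interior_Icc] at ht
        exact ((hgderiv t (hmem ⟨ht.1.le, ht.2.le⟩)).differentiableAt).differentiableWithinAt)
      hder
  have : g t0 ≤ g t1 :=
    hmono' ⟨le_rfl, ht0le⟩ ⟨ht0le, le_rfl⟩ ht0le
  linarith
end

section
/- Let a : ℝⁿ → ℝ and b : ℝⁿ → ℝᵐ be locally Lipschitz with b(x) ≠ 0 for all x in an open set D ⊆ ℝⁿ. Then the function u*(x) = min(a(x), 0) · (-bᵀ(x) / ‖b(x)‖²) is locally Lipschitz on D. -/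
open Set

theorem qp_solution_locally_lipschitz (n m : ℕ)
    (D : Set (EuclideanSpace ℝ (Fin n))) (hD : IsOpen D)
    (a : EuclideanSpace ℝ (Fin n) → ℝ)
    (b : EuclideanSpace ℝ (Fin n) → EuclideanSpace ℝ (Fin m))
    (ha : LocallyLipschitzOn D a) (hb : LocallyLipschitzOn D b)
    (hb0 : ∀ x ∈ D, b x ≠ 0) :
    LocallyLipschitzOn D (fun x => (-(min (a x) 0) / ‖b x‖ ^ 2) • b x) := by
  intro x hx
  set G : ℝ × EuclideanSpace ℝ (Fin m) → EuclideanSpace ℝ (Fin m) :=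
    fun p => (-p.1 / ‖p.2‖ ^ 2) • p.2 with hGdef
  set g : EuclideanSpace ℝ (Fin n) → ℝ × EuclideanSpace ℝ (Fin m) :=
    fun y => (min (a y) 0, b y) with hgdef
  -- G is C¹ at g x
  have hbx : b x ≠ 0 := hb0 x hx
  have hsq : ContDiffAt ℝ 1 (fun p : ℝ × EuclideanSpace ℝ (Fin m) => ‖p.2‖ ^ 2) (g x) :=
    (contDiff_norm_sq ℝ).contDiffAt.comp _ contDiffAt_snd
  have hGd : ContDiffAt ℝ 1 G (g x) := by
    refine ContDiffAt.smul (ContDiffAt.div contDiffAt_fst.neg hsq ?_) contDiffAt_snd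
    simpa [hgdef] using pow_ne_zero 2 (norm_ne_zero_iff.2 hbx)
  obtain ⟨K, t, ht, hG⟩ := hGd.exists_lipschitzOnWith
  -- g is Lipschitz near x within D
  obtain ⟨Ka, ua, hua, hla⟩ := ha hx
  obtain ⟨Kb, ub, hub, hlb⟩ := hb hx
  have hmin : LipschitzWith (1 ⊔ 0) (fun s : ℝ => min s 0) :=
    LipschitzWith.id.min (LipschitzWith.const 0)
  have hla' : LipschitzOnWith ((1 ⊔ 0) * Ka) (fun y => min (a y) 0) ua :=
    hmin.comp_lipschitzOnWith hla
  have hg : LipschitzOnWith (max ((1 ⊔ 0) * Ka) Kb) g (ua ∩ ub) :=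
    (hla'.mono inter_subset_left).prodMk (hlb.mono inter_subset_right)
  have hxu : x ∈ ua ∩ ub := ⟨mem_of_mem_nhdsWithin hx hua, mem_of_mem_nhdsWithin hx hub⟩
  have hgc : ContinuousWithinAt g D x := by
    have h1 : ContinuousWithinAt g (ua ∩ ub) x := hg.continuousOn.continuousWithinAt hxu
    exact h1.mono_of_mem_nhdsWithin (Filter.inter_mem hua hub)
  have hpre : g ⁻¹' t ∈ nhdsWithin x D := hgc.preimage_mem_nhdsWithin ht
  refine ⟨K * max ((1 ⊔ 0) * Ka) Kb, (ua ∩ ub) ∩ g ⁻¹' t,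
    Filter.inter_mem (Filter.inter_mem hua hub) hpre, ?_⟩
  have hcomp : LipschitzOnWith (K * max ((1 ⊔ 0) * Ka) Kb) (G ∘ g) ((ua ∩ ub) ∩ g ⁻¹' t) :=
    hG.comp (hg.mono inter_subset_left) fun y hy => hy.2
  have heq : (fun y => (-(min (a y) 0) / ‖b y‖ ^ 2) • b y) = G ∘ g := by
    funext y; simp [hGdef, hgdef]
  rw [heq]
  exact hcomp
end

section
/- Let G be a symmetric positive definite 2×2 real matrix and p ∈ ℝ². Define ω(r) = min(r,0). Suppose G₂₁·ω(p₂) - G₂₂·p₁ < 0. Then λ = (0, ω(p₂)/G₂₂) satisfies: Gλ ≤ p componentwise, λ ≤ 0 componentwise, and (Gλ)_i < p_i implies λ_i = 0 for i = 1, 2. -/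
theorem first_branch_multipliers
    (G : Matrix (Fin 2) (Fin 2) ℝ) (hG : G.PosDef) (hsymm : G.IsSymm)
    (p : Fin 2 → ℝ)
    (hcond : G 1 0 * min (p 1) 0 - G 1 1 * p 0 < 0)
    (l : Fin 2 → ℝ) (hl : l = ![0, min (p 1) 0 / G 1 1]) :
    (∀ i : Fin 2, G.mulVec l i ≤ p i) ∧
    (∀ i : Fin 2, l i ≤ 0) ∧
    (∀ i : Fin 2, G.mulVec l i < p i → l i = 0) := by
  have h11 : 0 < G 1 1 := by
    exact hG.diag_pos
  have h01 : G 0 1 = G 1 0 := by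
    have := congrFun (congrFun hsymm 1) 0
    simpa [Matrix.transpose_apply] using this
  set m := min (p 1) 0 with hm
  have hm0 : m ≤ 0 := min_le_right _ _
  have hmp : m ≤ p 1 := min_le_left _ _
  subst hl
  have hv0 : G.mulVec ![0, m / G 1 1] 0 = G 0 1 * (m / G 1 1) := by
    simp [Matrix.mulVec, dotProduct, Fin.sum_univ_two]
  have hv1 : G.mulVec ![0, m / G 1 1] 1 = m := by
    simp [Matrix.mulVec, dotProduct, Fin.sum_univ_two]
    field_simp
  have h0lt : G 0 1 * (m / G 1 1) < p 0 := by
    rw [h01, mul_div_assoc', div_lt_iff₀ h11]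
    linarith
  refine ⟨?_, ?_, ?_⟩
  · intro i
    fin_cases i
    · simpa [hv0] using h0lt.le
    · simpa [hv1] using hmp
  · intro i
    fin_cases i
    · simp
    · simpa using div_nonpos_of_nonpos_of_nonneg hm0 h11.le
  · intro i
    fin_cases i
    · simp
    · intro h
      replace h : m < p 1 := by simpa [hv1] using h
      have hm' : m = 0 := by
        rcases le_or_gt (p 1) 0 with hc | hc
        · have : m = p 1 := min_eq_left hc
          linarith
        · simp [hm, le_of_lt hc]
      show ![(0:ℝ), m / G 1 1] 1 = 0
      simp [hm']
end
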